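/- Let α > 0 and μ > μ_P(α) = (2/α)√(1+α). With θ_1 = arctan(½(μα − √(μ²α² − 4(1+α)))), φ_1⁺ = √(1/sin θ_1), λ_1 = p_+'(θ_1)·φ_1⁺ and λ_2 = −2 tan(θ_1)·φ_1⁺ (where p_+(θ) = 1 + α cos²θ − μα sin θ cos θ), the ratio ξ = λ_2/λ_1 satisfies ξ < 1 if and only if μ > μ_C(α) = (4/α)√((α+1)/3). -/

import Mathlib

open Real
set_option maxHeartbeats 1000000 in
/-- For `α > 0` and `μ > μ_P(α)`, with `λ₁ = p₊'(θ₁)φ₁⁺` and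
`λ₂ = −2 tan(θ₁)φ₁⁺`, the ratio `ξ = λ₂/λ₁` satisfies `ξ < 1` iff
`μ > μ_C(α) = (4/α)√((α+1)/3)`. -/
theorem xi_lt_one_iff_mu_gt_muC (α μ : ℝ) (hα : 0 < α)
    (hμP : 2 / α * Real.sqrt (1 + α) < μ) :
    let pplus : ℝ → ℝ := fun θ => 1 + α * Real.cos θ ^ 2 - μ * α * Real.sin θ * Real.cos θ
    let θ₁ : ℝ := Real.arctan ((μ * α - Real.sqrt (μ ^ 2 * α ^ 2 - 4 * (1 + α))) / 2)
    let φ₁ : ℝ := Real.sqrt (1 / Real.sin θ₁)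
    let lam₁ : ℝ := deriv pplus θ₁ * φ₁
    let lam₂ : ℝ := -2 * Real.tan θ₁ * φ₁
    (lam₂ / lam₁ < 1 ↔ 4 / α * Real.sqrt ((α + 1) / 3) < μ) := by
  intro pplus θ₁ φ₁ lam₁ lam₂
  show (-2 * Real.tan (Real.arctan ((μ * α - Real.sqrt (μ ^ 2 * α ^ 2 - 4 * (1 + α))) / 2)) *
      Real.sqrt (1 / Real.sin (Real.arctan ((μ * α - Real.sqrt (μ ^ 2 * α ^ 2 - 4 * (1 + α))) / 2)))) /
      (deriv (fun θ => 1 + α * Real.cos θ ^ 2 - μ * α * Real.sin θ * Real.cos θ)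
        (Real.arctan ((μ * α - Real.sqrt (μ ^ 2 * α ^ 2 - 4 * (1 + α))) / 2)) *
      Real.sqrt (1 / Real.sin (Real.arctan ((μ * α - Real.sqrt (μ ^ 2 * α ^ 2 - 4 * (1 + α))) / 2)))) < 1
      ↔ 4 / α * Real.sqrt ((α + 1) / 3) < μ
  clear_value pplus θ₁ φ₁ lam₁ lam₂
  clear lam₁ lam₂ φ₁ θ₁ pplus
  -- basic facts
  have h1α : (0:ℝ) < 1 + α := by linarith
  have hsq1 : 0 < Real.sqrt (1+α) := Real.sqrt_pos.mpr h1α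
  rw [div_mul_eq_mul_div, div_lt_iff₀ hα] at hμP
  have hbpos : 0 < μ * α := by linarith
  have hD : 0 < μ^2*α^2 - 4*(1+α) := by
    have h2 : Real.sqrt (1+α)^2 = 1+α := Real.sq_sqrt h1α.le
    nlinarith [hμP, hbpos, hsq1]
  set A := Real.sqrt (μ^2*α^2 - 4*(1+α)) with hAdef
  clear_value A
  have hA0 : 0 < A := by rw [hAdef]; exact Real.sqrt_pos.mpr hD
  have hA2 : A^2 = μ^2*α^2 - 4*(1+α) := by rw [hAdef]; exact Real.sq_sqrt hD.le
  set t := (μ*α - A)/2 with htdef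
  clear_value t
  have ht0 : 0 < t := by
    have hAb : A < μ*α := by nlinarith
    rw [htdef]; linarith
  have hbt : μ*α*t = t^2 + 1 + α := by
    rw [htdef]; field_simp; nlinarith [hA2]
  have ht2 : t^2 < 1 + α := by nlinarith [hbt, ht0]
  -- trig facts
  set T := Real.arctan t with hTdef
  clear_value T
  have hTpos : 0 < T := by rw [hTdef, ← Real.arctan_zero]; exact Real.arctan_strictMono ht0
  have hTlt : T < π/2 := by rw [hTdef]; exact Real.arctan_lt_pi_div_two t
  have hcos : 0 < Real.cos T := by rw [hTdef]; exact Real.cos_arctan_pos t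
  have hsin : 0 < Real.sin T := Real.sin_pos_of_pos_of_lt_pi hTpos (by linarith [Real.pi_pos])
  have htan : Real.tan T = t := by rw [hTdef]; exact Real.tan_arctan t
  have hsc : Real.sin T = t * Real.cos T := by
    rw [← htan, Real.tan_eq_sin_div_cos]; field_simp
  have hc2 : Real.cos T ^2 * (1+t^2) = 1 := by
    have h := Real.sin_sq_add_cos_sq T
    rw [hsc] at h; nlinarith [h]
  have hφ : 0 < Real.sqrt (1 / Real.sin T) := Real.sqrt_pos.mpr (by positivity)
  -- derivative
  have h3 : HasDerivAt (fun θ:ℝ => Real.sin θ * Real.cos θ)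
      (Real.cos T * Real.cos T + Real.sin T * (-Real.sin T)) T :=
    (Real.hasDerivAt_sin T).mul (Real.hasDerivAt_cos T)
  have h2 : HasDerivAt (fun θ:ℝ => Real.cos θ ^ 2)
      (2 * Real.cos T ^ 1 * (-Real.sin T)) T := (Real.hasDerivAt_cos T).pow 2
  have h4 := ((h2.const_mul α).const_add 1).sub (h3.const_mul (μ*α))
  have h5 : HasDerivAt (fun θ:ℝ => 1 + α * Real.cos θ ^ 2 - μ * α * Real.sin θ * Real.cos θ)
      (-2*α*Real.sin T*Real.cos T - μ*α*(Real.cos T^2 - Real.sin T^2)) T := by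
    have hfe : (fun θ:ℝ => 1 + α * Real.cos θ ^ 2 - μ * α * Real.sin θ * Real.cos θ)
        = (fun θ:ℝ => 1 + α * Real.cos θ ^ 2 - μ * α * (Real.sin θ * Real.cos θ)) := by
      funext θ; ring
    rw [hfe]; exact h4.congr_deriv (by ring)
  rw [h5.deriv, htan]
  -- rewrite derivative value in terms of t
  set Dn := (μ^2*α^2 - 2*α)*t - μ*α*(2+α) with hDndef
  clear_value Dn
  have hp' : -2*α*Real.sin T*Real.cos T - μ*α*(Real.cos T^2 - Real.sin T^2)
      = Real.cos T^2 * Dn := by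
    rw [hsc, hDndef]; linear_combination (-(μ*α)*Real.cos T^2) * hbt
  rw [hp']
  have hbtsq : (μ*α*t)^2 = (t^2+1+α)^2 := by rw [hbt]
  have hkey : t * Dn = -((t^2+1) * ((1+α) - t^2)) := by
    rw [hDndef]; linear_combination hbtsq - (2+α)*hbt
  have hDn : Dn < 0 := by
    by_contra h
    push_neg at h
    nlinarith [hkey, ht0, ht2, mul_nonneg ht0.le h]
  have hcDn : Real.cos T^2 * Dn < 0 := mul_neg_of_pos_of_neg (by positivity) hDn
  -- reduce the ratio
  rw [mul_div_mul_right _ _ hφ.ne']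
  have hratio : (-2*t) / (Real.cos T^2 * Dn) = (2*t) / (-(Real.cos T^2 * Dn)) := by
    ring
  rw [hratio, div_lt_one (by linarith)]
  -- key algebraic equivalence
  have hkey2 : t * (Dn + 2*t*(1+t^2)) = (t^2+1) * (3*t^2 - (1+α)) := by
    rw [hDndef]; linear_combination hbtsq - (2+α)*hbt
  have hDneq : -(Real.cos T^2*Dn)*(1+t^2) = -Dn := by linear_combination (-Dn) * hc2
  have heq : 2*t*(1+t^2)*Real.cos T^2 = 2*t := by linear_combination (2*t)*hc2
  have hstep : 2*t < -(Real.cos T^2 * Dn) ↔ 3*t^2 < 1+α := by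
    constructor
    · intro h
      have h2' := mul_lt_mul_of_pos_right h (show (0:ℝ) < 1+t^2 by positivity)
      rw [hDneq] at h2'
      by_contra hcon
      push_neg at hcon
      have h3' : t * (Dn + 2*t*(1+t^2)) < 0 :=
        mul_neg_of_pos_of_neg ht0 (by linarith)
      have h4' : (0:ℝ) ≤ (t^2+1) * (3*t^2 - (1+α)) :=
        mul_nonneg (by positivity) (by linarith)
      linarith [hkey2]
    · intro h
      have hX : Dn + 2*t*(1+t^2) < 0 := by
        by_contra hcon
        push_neg at hcon
        have h3' : (0:ℝ) ≤ t * (Dn + 2*t*(1+t^2)) := mul_nonneg ht0.le hcon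
        have h4' : (t^2+1) * (3*t^2 - (1+α)) < 0 :=
          mul_neg_of_pos_of_neg (by positivity) (by linarith)
        linarith [hkey2]
      have h2' := mul_lt_mul_of_pos_right (show 2*t*(1+t^2) < -Dn by linarith)
        (show (0:ℝ) < Real.cos T^2 by positivity)
      have h5' : -Dn * Real.cos T^2 = -(Real.cos T^2 * Dn) := by ring
      linarith [h2', heq, h5']
  rw [hstep]
  -- final equivalence with μ_C
  set q := Real.sqrt ((α+1)/3) with hqdef
  clear_value q
  have hq0 : 0 < q := by rw [hqdef]; exact Real.sqrt_pos.mpr (by linarith)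
  have hq2 : q^2 = (α+1)/3 := by rw [hqdef]; exact Real.sq_sqrt (by linarith)
  have hqle : q ≤ Real.sqrt (1+α) := by rw [hqdef]; exact Real.sqrt_le_sqrt (by linarith)
  have hb2q : 2*q < μ*α := by linarith
  rw [div_mul_eq_mul_div, div_lt_iff₀ hα]
  constructor
  · intro h
    have htq : t < q := lt_of_pow_lt_pow_left₀ 2 hq0.le (by linarith)
    have hlt : μ*α - 2*q < A := by rw [htdef] at htq; linarith
    have hsq : (μ*α - 2*q)^2 < A^2 := pow_lt_pow_left₀ hlt (by linarith) (by norm_num)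
    have h16 : 4*q*q < μ*α*q := by linarith [hsq, hA2, hq2]
    exact lt_of_mul_lt_mul_right h16 hq0.le
  · intro h
    have h16 := mul_lt_mul_of_pos_right h hq0
    have hsq : (μ*α - 2*q)^2 < A^2 := by linarith [h16, hA2, hq2]
    have hlt : μ*α - 2*q < A := lt_of_pow_lt_pow_left₀ 2 hA0.le hsq
    have htq : t < q := by rw [htdef]; linarith
    have ht2q : t^2 < q^2 := pow_lt_pow_left₀ htq ht0.le (by norm_num)
    linarith [hq2]
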